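/- Fix u₁, u₂ ∈ ℝⁿ and let 0 ≤ k, ℓ < n, β > 0 with k + ℓ + β ≥ n and k + ℓ ≠ n. Then ∫_{ℝⁿ} ⟨z⟩^{−β−ε} / (|z−u₁|^k |z−u₂|^ℓ) dz ≲ |u₁−u₂|^{−max(0, k+ℓ−n)} when |u₁−u₂| ≤ 1, and ≲ |u₁−u₂|^{−min(k, ℓ, k+ℓ+β−n)} when |u₁−u₂| > 1, with implicit constant independent of u₁, u₂. -/

import Mathlib

open MeasureTheory Real Set Metric ENNReal
variable {n : ℕ}
local notation "E" => EuclideanSpace ℝ (Fin n)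



lemma aux_ball (hn : 0 < n) {t : ℝ} (ht : 0 ≤ t) (htn : t < n) :
    ∃ K : ℝ≥0∞, K ≠ ∞ ∧ ∀ (a : E) (r : ℝ), 0 < r →
      ∫⁻ z in {z : E | ‖z - a‖ ≤ r}, ENNReal.ofReal (‖z - a‖ ^ (-t)) ≤
        K * ENNReal.ofReal (r ^ ((n : ℝ) - t)) := by
  haveI : Nonempty (Fin n) := ⟨⟨0, hn⟩⟩
  haveI : Nontrivial E := inferInstance
  set μB := volume (ball (0 : E) 1) with hμB
  set ρ : ℝ≥0∞ := ENNReal.ofReal ((2 : ℝ) ^ (t - (n : ℝ))) with hρ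
  have hρ1 : ρ < 1 := by
    rw [hρ, ENNReal.ofReal_lt_one]
    exact rpow_lt_one_of_one_lt_of_neg one_lt_two (by linarith)
  refine ⟨ENNReal.ofReal ((2 : ℝ) ^ t) * μB * (1 - ρ)⁻¹, ?_, ?_⟩
  · exact ENNReal.mul_ne_top (ENNReal.mul_ne_top ENNReal.ofReal_ne_top
      measure_ball_lt_top.ne) (ENNReal.inv_ne_top.mpr (tsub_pos_of_lt hρ1).ne')
  intro a r hr
  set c : ℕ → ℝ := fun j => r * (2 : ℝ) ^ (-(j : ℝ)) with hcdef
  have hc : ∀ j, 0 < c j := fun j => mul_pos hr (rpow_pos_of_pos two_pos _)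
  set S : ℕ → Set (EuclideanSpace ℝ (Fin n)) :=
    fun j => (fun z : E => ‖z - a‖) ⁻¹' Icc (c (j + 1)) (c j) with hSdef
  have hSmeas : ∀ j, MeasurableSet (S j) := fun j =>
    ((continuous_id.sub continuous_const).norm).measurable measurableSet_Icc
  -- cover
  have hcover : {z : E | ‖z - a‖ ≤ r} ⊆ {a} ∪ ⋃ j, S j := by
    intro z hz
    rcases eq_or_ne z a with h | h
    · exact Or.inl h
    · right
      have hD : 0 < ‖z - a‖ := by
        rw [norm_pos_iff]; exact sub_ne_zero_of_ne h
      set D := ‖z - a‖ with hDdef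
      set q := r / D with hq
      have hq0 : 0 < q := div_pos hr hD
      have hq1 : 1 ≤ q := (one_le_div hD).mpr hz
      set j := Nat.floor (Real.logb 2 q) with hj
      have hlogb : 0 ≤ Real.logb 2 q := Real.logb_nonneg one_lt_two hq1
      have h1 : (2 : ℝ) ^ (j : ℝ) ≤ q := by
        calc (2 : ℝ) ^ (j : ℝ) ≤ (2 : ℝ) ^ Real.logb 2 q :=
              (Real.rpow_le_rpow_left_iff one_lt_two).mpr (Nat.floor_le hlogb)
        _ = q := Real.rpow_logb two_pos (by norm_num) hq0
      have h2 : q ≤ (2 : ℝ) ^ ((j : ℝ) + 1) := by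
        calc q = (2 : ℝ) ^ Real.logb 2 q := (Real.rpow_logb two_pos (by norm_num) hq0).symm
        _ ≤ (2 : ℝ) ^ ((j : ℝ) + 1) :=
              (Real.rpow_le_rpow_left_iff one_lt_two).mpr (Nat.lt_floor_add_one _).le
      have hDq : D = r / q := by
        rw [hq, div_div_eq_mul_div, mul_comm, mul_div_assoc, div_self hr.ne', mul_one]
      have e1 : c (j + 1) = r / (2 : ℝ) ^ ((j : ℝ) + 1) := by
        simp only [hcdef]
        push_cast
        rw [Real.rpow_neg two_pos.le, div_eq_mul_inv]
      have e2 : c j = r / (2 : ℝ) ^ (j : ℝ) := by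
        simp only [hcdef]
        rw [Real.rpow_neg two_pos.le, div_eq_mul_inv]
      refine mem_iUnion.mpr ⟨j, ?_⟩
      simp only [hSdef, Set.mem_preimage, Set.mem_Icc, ← hDdef]
      constructor
      · rw [e1, hDq]
        gcongr
      · rw [e2, hDq]
        gcongr
  calc ∫⁻ z in {z : E | ‖z - a‖ ≤ r}, ENNReal.ofReal (‖z - a‖ ^ (-t))
      ≤ ∫⁻ z in ({a} ∪ ⋃ j, S j), ENNReal.ofReal (‖z - a‖ ^ (-t)) :=
        lintegral_mono_set hcover
    _ ≤ (∫⁻ z in ({a} : Set E), ENNReal.ofReal (‖z - a‖ ^ (-t)))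
          + ∫⁻ z in (⋃ j, S j), ENNReal.ofReal (‖z - a‖ ^ (-t)) :=
        lintegral_union_le _ _ _
    _ ≤ 0 + ∑' j, ∫⁻ z in S j, ENNReal.ofReal (‖z - a‖ ^ (-t)) := by
        gcongr
        · rw [setLIntegral_measure_zero _ _ (measure_singleton a)]
        · exact lintegral_iUnion_le _ _
    _ = ∑' j, ∫⁻ z in S j, ENNReal.ofReal (‖z - a‖ ^ (-t)) := by rw [zero_add]
    _ ≤ ∑' j, ENNReal.ofReal ((c (j + 1)) ^ (-t)) * (ENNReal.ofReal ((c j) ^ (n : ℕ)) * μB) := by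
        refine ENNReal.tsum_le_tsum fun j => ?_
        calc ∫⁻ z in S j, ENNReal.ofReal (‖z - a‖ ^ (-t))
            ≤ ∫⁻ _ in S j, ENNReal.ofReal ((c (j + 1)) ^ (-t)) := by
              refine setLIntegral_mono' (hSmeas j) fun z hz => ?_
              exact ENNReal.ofReal_le_ofReal
                (rpow_le_rpow_of_nonpos (hc (j + 1)) hz.1 (neg_nonpos.mpr ht))
          _ = ENNReal.ofReal ((c (j + 1)) ^ (-t)) * volume (S j) := setLIntegral_const _ _
          _ ≤ ENNReal.ofReal ((c (j + 1)) ^ (-t)) * (ENNReal.ofReal ((c j) ^ (n : ℕ)) * μB) := by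
              gcongr
              calc volume (S j) ≤ volume (closedBall a (c j)) := by
                    refine measure_mono fun z hz => ?_
                    rw [mem_closedBall, dist_eq_norm]
                    exact hz.2
                _ = ENNReal.ofReal ((c j) ^ Module.finrank ℝ E) * μB :=
                    Measure.addHaar_closedBall _ a (hc j).le
                _ = ENNReal.ofReal ((c j) ^ (n : ℕ)) * μB := by
                    rw [finrank_euclideanSpace_fin]
    _ ≤ ENNReal.ofReal ((2 : ℝ) ^ t) * μB * (1 - ρ)⁻¹ * ENNReal.ofReal (r ^ ((n : ℝ) - t)) := by
        have key : ∀ j : ℕ, (c (j + 1)) ^ (-t) * (c j) ^ (n : ℕ) =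
            (2 : ℝ) ^ t * r ^ ((n : ℝ) - t) * ((2 : ℝ) ^ (t - (n : ℝ))) ^ j := by
          intro j
          have h2 : (0 : ℝ) < 2 := two_pos
          rw [← Real.rpow_natCast (c j) n, hcdef]
          rw [Real.mul_rpow hr.le (Real.rpow_nonneg h2.le _),
              Real.mul_rpow hr.le (Real.rpow_nonneg h2.le _),
              ← Real.rpow_natCast ((2:ℝ) ^ (t - (n:ℝ))) j,
              ← Real.rpow_mul h2.le, ← Real.rpow_mul h2.le, ← Real.rpow_mul h2.le]
          rw [mul_mul_mul_comm, ← Real.rpow_add hr, ← Real.rpow_add two_pos,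
            mul_right_comm, ← Real.rpow_add two_pos, mul_comm]
          congr 1 <;> (congr 1; push_cast; ring)
        have hkey2 : ∀ j : ℕ, ENNReal.ofReal ((c (j + 1)) ^ (-t)) *
            (ENNReal.ofReal ((c j) ^ (n : ℕ)) * μB) =
            (ENNReal.ofReal ((2 : ℝ) ^ t * r ^ ((n : ℝ) - t)) * μB) * ρ ^ j := by
          intro j
          rw [← mul_assoc, ← ENNReal.ofReal_mul (Real.rpow_nonneg (hc _).le _), key j,
            ENNReal.ofReal_mul (by positivity),
            ENNReal.ofReal_pow (by positivity : (0:ℝ) ≤ (2:ℝ) ^ (t - (n:ℝ)))]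
          rw [hρ]; ring
        calc ∑' j, ENNReal.ofReal ((c (j + 1)) ^ (-t)) *
              (ENNReal.ofReal ((c j) ^ (n : ℕ)) * μB)
            = ∑' j, (ENNReal.ofReal ((2 : ℝ) ^ t * r ^ ((n : ℝ) - t)) * μB) * ρ ^ j :=
              tsum_congr hkey2
          _ = (ENNReal.ofReal ((2 : ℝ) ^ t * r ^ ((n : ℝ) - t)) * μB) * ∑' j : ℕ, ρ ^ j :=
              ENNReal.tsum_mul_left
          _ = (ENNReal.ofReal ((2 : ℝ) ^ t * r ^ ((n : ℝ) - t)) * μB) * (1 - ρ)⁻¹ := by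
              rw [ENNReal.tsum_geometric]
          _ = ENNReal.ofReal ((2 : ℝ) ^ t) * μB * (1 - ρ)⁻¹ *
              ENNReal.ofReal (r ^ ((n : ℝ) - t)) := by
              rw [ENNReal.ofReal_mul (by positivity)]; ring
          _ ≤ ENNReal.ofReal ((2 : ℝ) ^ t) * μB * (1 - ρ)⁻¹ *
              ENNReal.ofReal (r ^ ((n : ℝ) - t)) := le_rfl



lemma aux_out (hn : 0 < n) {t : ℝ} (htn : (n : ℝ) < t) :
    ∃ K : ℝ≥0∞, K ≠ ∞ ∧ ∀ (a : E) (r : ℝ), 0 < r →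
      ∫⁻ z in {z : E | r ≤ ‖z - a‖}, ENNReal.ofReal (‖z - a‖ ^ (-t)) ≤
        K * ENNReal.ofReal (r ^ ((n : ℝ) - t)) := by
  have ht : 0 ≤ t := le_trans (Nat.cast_nonneg n) htn.le
  set μB := volume (ball (0 : E) 1) with hμB
  set ρ : ℝ≥0∞ := ENNReal.ofReal ((2 : ℝ) ^ ((n : ℝ) - t)) with hρ
  have hρ1 : ρ < 1 := by
    rw [hρ, ENNReal.ofReal_lt_one]
    exact rpow_lt_one_of_one_lt_of_neg one_lt_two (by linarith)
  refine ⟨ENNReal.ofReal ((2 : ℝ) ^ (n : ℝ)) * μB * (1 - ρ)⁻¹, ?_, ?_⟩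
  · exact ENNReal.mul_ne_top (ENNReal.mul_ne_top ENNReal.ofReal_ne_top
      measure_ball_lt_top.ne) (ENNReal.inv_ne_top.mpr (tsub_pos_of_lt hρ1).ne')
  intro a r hr
  set c : ℕ → ℝ := fun j => r * (2 : ℝ) ^ (j : ℝ) with hcdef
  have hc : ∀ j, 0 < c j := fun j => mul_pos hr (rpow_pos_of_pos two_pos _)
  set S : ℕ → Set (EuclideanSpace ℝ (Fin n)) :=
    fun j => (fun z : E => ‖z - a‖) ⁻¹' Icc (c j) (c (j + 1)) with hSdef
  have hSmeas : ∀ j, MeasurableSet (S j) := fun j =>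
    ((continuous_id.sub continuous_const).norm).measurable measurableSet_Icc
  have hcover : {z : E | r ≤ ‖z - a‖} ⊆ ⋃ j, S j := by
    intro z hz
    have hD : 0 < ‖z - a‖ := lt_of_lt_of_le hr hz
    set D := ‖z - a‖ with hDdef
    set q := D / r with hq
    have hq0 : 0 < q := div_pos hD hr
    have hq1 : 1 ≤ q := (one_le_div hr).mpr hz
    set j := Nat.floor (Real.logb 2 q) with hj
    have hlogb : 0 ≤ Real.logb 2 q := Real.logb_nonneg one_lt_two hq1
    have h1 : (2 : ℝ) ^ (j : ℝ) ≤ q := by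
      calc (2 : ℝ) ^ (j : ℝ) ≤ (2 : ℝ) ^ Real.logb 2 q :=
            (Real.rpow_le_rpow_left_iff one_lt_two).mpr (Nat.floor_le hlogb)
      _ = q := Real.rpow_logb two_pos (by norm_num) hq0
    have h2 : q ≤ (2 : ℝ) ^ ((j : ℝ) + 1) := by
      calc q = (2 : ℝ) ^ Real.logb 2 q := (Real.rpow_logb two_pos (by norm_num) hq0).symm
      _ ≤ (2 : ℝ) ^ ((j : ℝ) + 1) :=
            (Real.rpow_le_rpow_left_iff one_lt_two).mpr (Nat.lt_floor_add_one _).le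
    have hDq : D = r * q := by
      rw [hq, mul_div_assoc', mul_comm, mul_div_assoc, div_self hr.ne', mul_one]
    refine mem_iUnion.mpr ⟨j, ?_⟩
    simp only [hSdef, Set.mem_preimage, Set.mem_Icc, ← hDdef]
    constructor
    · rw [hDq]
      simp only [hcdef]
      exact mul_le_mul_of_nonneg_left h1 hr.le
    · rw [hDq]
      simp only [hcdef]
      push_cast
      exact mul_le_mul_of_nonneg_left h2 hr.le
  calc ∫⁻ z in {z : E | r ≤ ‖z - a‖}, ENNReal.ofReal (‖z - a‖ ^ (-t))
      ≤ ∫⁻ z in (⋃ j, S j), ENNReal.ofReal (‖z - a‖ ^ (-t)) := lintegral_mono_set hcover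
    _ ≤ ∑' j, ∫⁻ z in S j, ENNReal.ofReal (‖z - a‖ ^ (-t)) := lintegral_iUnion_le _ _
    _ ≤ ∑' j, ENNReal.ofReal ((c j) ^ (-t)) * (ENNReal.ofReal ((c (j + 1)) ^ (n : ℕ)) * μB) := by
        refine ENNReal.tsum_le_tsum fun j => ?_
        calc ∫⁻ z in S j, ENNReal.ofReal (‖z - a‖ ^ (-t))
            ≤ ∫⁻ _ in S j, ENNReal.ofReal ((c j) ^ (-t)) := by
              refine setLIntegral_mono' (hSmeas j) fun z hz => ?_
              exact ENNReal.ofReal_le_ofReal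
                (rpow_le_rpow_of_nonpos (hc j) hz.1 (neg_nonpos.mpr ht))
          _ = ENNReal.ofReal ((c j) ^ (-t)) * volume (S j) := setLIntegral_const _ _
          _ ≤ ENNReal.ofReal ((c j) ^ (-t)) *
              (ENNReal.ofReal ((c (j + 1)) ^ (n : ℕ)) * μB) := by
              gcongr
              calc volume (S j) ≤ volume (closedBall a (c (j + 1))) := by
                    refine measure_mono fun z hz => ?_
                    rw [mem_closedBall, dist_eq_norm]
                    exact hz.2
                _ = ENNReal.ofReal ((c (j + 1)) ^ Module.finrank ℝ E) * μB :=
                    Measure.addHaar_closedBall _ a (hc (j + 1)).le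
                _ = ENNReal.ofReal ((c (j + 1)) ^ (n : ℕ)) * μB := by
                    rw [finrank_euclideanSpace_fin]
    _ ≤ ENNReal.ofReal ((2 : ℝ) ^ (n : ℝ)) * μB * (1 - ρ)⁻¹ *
        ENNReal.ofReal (r ^ ((n : ℝ) - t)) := by
        have key : ∀ j : ℕ, (c j) ^ (-t) * (c (j + 1)) ^ (n : ℕ) =
            (2 : ℝ) ^ (n : ℝ) * r ^ ((n : ℝ) - t) * ((2 : ℝ) ^ ((n : ℝ) - t)) ^ j := by
          intro j
          have h2 : (0 : ℝ) < 2 := two_pos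
          rw [← Real.rpow_natCast (c (j + 1)) n]
          simp only [hcdef]
          rw [Real.mul_rpow hr.le (Real.rpow_nonneg h2.le _),
              Real.mul_rpow hr.le (Real.rpow_nonneg h2.le _),
              ← Real.rpow_natCast ((2:ℝ) ^ ((n:ℝ) - t)) j,
              ← Real.rpow_mul h2.le, ← Real.rpow_mul h2.le, ← Real.rpow_mul h2.le,
              mul_mul_mul_comm, ← Real.rpow_add hr, ← Real.rpow_add two_pos,
              mul_right_comm, ← Real.rpow_add two_pos, mul_comm]
          congr 1 <;> (congr 1; push_cast; ring)
        have hkey2 : ∀ j : ℕ, ENNReal.ofReal ((c j) ^ (-t)) *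
            (ENNReal.ofReal ((c (j + 1)) ^ (n : ℕ)) * μB) =
            (ENNReal.ofReal ((2 : ℝ) ^ (n : ℝ) * r ^ ((n : ℝ) - t)) * μB) * ρ ^ j := by
          intro j
          rw [← mul_assoc, ← ENNReal.ofReal_mul (Real.rpow_nonneg (hc _).le _), key j,
            ENNReal.ofReal_mul (by positivity),
            ENNReal.ofReal_pow (by positivity : (0:ℝ) ≤ (2:ℝ) ^ ((n:ℝ) - t))]
          rw [hρ]; ring
        calc ∑' j, ENNReal.ofReal ((c j) ^ (-t)) *
              (ENNReal.ofReal ((c (j + 1)) ^ (n : ℕ)) * μB)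
            = ∑' j, (ENNReal.ofReal ((2 : ℝ) ^ (n : ℝ) * r ^ ((n : ℝ) - t)) * μB) * ρ ^ j :=
              tsum_congr hkey2
          _ = (ENNReal.ofReal ((2 : ℝ) ^ (n : ℝ) * r ^ ((n : ℝ) - t)) * μB) * ∑' j : ℕ, ρ ^ j :=
              ENNReal.tsum_mul_left
          _ = (ENNReal.ofReal ((2 : ℝ) ^ (n : ℝ) * r ^ ((n : ℝ) - t)) * μB) * (1 - ρ)⁻¹ := by
              rw [ENNReal.tsum_geometric]
          _ = ENNReal.ofReal ((2 : ℝ) ^ (n : ℝ)) * μB * (1 - ρ)⁻¹ *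
              ENNReal.ofReal (r ^ ((n : ℝ) - t)) := by
              rw [ENNReal.ofReal_mul (by positivity)]; ring
          _ ≤ ENNReal.ofReal ((2 : ℝ) ^ (n : ℝ)) * μB * (1 - ρ)⁻¹ *
              ENNReal.ofReal (r ^ ((n : ℝ) - t)) := le_rfl



lemma aux_jb {s : ℝ} (hs : (n : ℝ) < s) :
    ∫⁻ z : E, ENNReal.ofReal ((1 + ‖z‖ ^ 2) ^ (-s / 2)) < ∞ := by
  have h0 : 0 < s := lt_of_le_of_lt (Nat.cast_nonneg n) hs
  have hfr : (Module.finrank ℝ (EuclideanSpace ℝ (Fin n)) : ℝ) < s := by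
    rwa [finrank_euclideanSpace_fin]
  calc ∫⁻ z : E, ENNReal.ofReal ((1 + ‖z‖ ^ 2) ^ (-s / 2))
      ≤ ∫⁻ z : E, ENNReal.ofReal ((2 : ℝ) ^ (s / 2) * (1 + ‖z‖) ^ (-s)) :=
        lintegral_mono fun z => ENNReal.ofReal_le_ofReal (rpow_neg_one_add_norm_sq_le z h0)
    _ = ENNReal.ofReal ((2 : ℝ) ^ (s / 2)) * ∫⁻ z : E, ENNReal.ofReal ((1 + ‖z‖) ^ (-s)) := by
        simp_rw [ENNReal.ofReal_mul (by positivity : (0:ℝ) ≤ (2:ℝ) ^ (s/2))]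
        exact lintegral_const_mul' _ _ ENNReal.ofReal_ne_top
    _ < ∞ := ENNReal.mul_lt_top ENNReal.ofReal_lt_top (finite_integral_one_add_norm hfr)

lemma aux_M (hn : 0 < n) {s t : ℝ} (hs : 0 < s) (ht : 0 ≤ t) (htn : t < n)
    (hst : (n : ℝ) < s + t) :
    ∃ M : ℝ≥0∞, M ≠ ∞ ∧ ∀ a : E,
      ∫⁻ z : E, ENNReal.ofReal ((1 + ‖z‖ ^ 2) ^ (-s / 2) * ‖z - a‖ ^ (-t)) ≤ M := by
  obtain ⟨K₁, hK₁, hball⟩ := aux_ball hn ht htn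
  obtain ⟨K₂, hK₂, hout⟩ := aux_out hn hst
  set F0 := ∫⁻ z : E, ENNReal.ofReal ((1 + ‖z‖ ^ 2) ^ (-(s + t) / 2)) with hF0
  have hF0fin : F0 < ∞ := aux_jb hst
  refine ⟨K₁ * ENNReal.ofReal ((1 : ℝ) ^ ((n : ℝ) - t)) + (ENNReal.ofReal ((3 : ℝ) ^ t) * F0 +
      ENNReal.ofReal ((2 : ℝ) ^ (-s)) * (K₂ * ENNReal.ofReal ((1 : ℝ) ^ ((n : ℝ) - (s + t))))),
    ?_, ?_⟩
  · refine ENNReal.add_ne_top.mpr ⟨?_, ENNReal.add_ne_top.mpr ⟨?_, ?_⟩⟩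
    · exact ENNReal.mul_ne_top hK₁ ENNReal.ofReal_ne_top
    · exact ENNReal.mul_ne_top ENNReal.ofReal_ne_top hF0fin.ne
    · exact ENNReal.mul_ne_top ENNReal.ofReal_ne_top
        (ENNReal.mul_ne_top hK₂ ENNReal.ofReal_ne_top)
  intro a
  set P : Set (EuclideanSpace ℝ (Fin n)) := {z : E | ‖z - a‖ ≤ 1} with hP
  set U : Set (EuclideanSpace ℝ (Fin n)) :=
    {z : E | 1 ≤ ‖z - a‖ ∧ ‖z‖ ≤ 2 * ‖z - a‖} with hU
  set V : Set (EuclideanSpace ℝ (Fin n)) :=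
    {z : E | 1 ≤ ‖z - a‖ ∧ 2 * ‖z - a‖ < ‖z‖} with hV
  have hmz : Measurable fun z : E => ‖z - a‖ :=
    ((continuous_id.sub continuous_const).norm).measurable
  have hPm : MeasurableSet P := measurableSet_le hmz measurable_const
  have hUm : MeasurableSet U :=
    (measurableSet_le measurable_const hmz).inter
      (measurableSet_le continuous_norm.measurable (hmz.const_mul 2))
  have hVm : MeasurableSet V :=
    (measurableSet_le measurable_const hmz).inter
      (measurableSet_lt (hmz.const_mul 2) continuous_norm.measurable)
  have hcover : (univ : Set (EuclideanSpace ℝ (Fin n))) ⊆ P ∪ (U ∪ V) := by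
    intro z _
    rcases le_or_gt (‖z - a‖) 1 with h | h
    · exact Or.inl h
    · rcases le_or_gt (‖z‖) (2 * ‖z - a‖) with h' | h'
      · exact Or.inr (Or.inl ⟨h.le, h'⟩)
      · exact Or.inr (Or.inr ⟨h.le, h'⟩)
  have hsqrt : ∀ z : E, ((1 : ℝ) + ‖z‖ ^ 2) ^ ((1 : ℝ) / 2) = √(1 + ‖z‖ ^ 2) := fun z =>
    (Real.rpow_natCast _ _ ▸ (Real.sqrt_eq_rpow _).symm)
  -- bound on P
  have hPb : ∫⁻ z in P, ENNReal.ofReal ((1 + ‖z‖ ^ 2) ^ (-s / 2) * ‖z - a‖ ^ (-t)) ≤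
      K₁ * ENNReal.ofReal ((1 : ℝ) ^ ((n : ℝ) - t)) := by
    refine le_trans (setLIntegral_mono' hPm fun z hz => ?_) (hball a 1 one_pos)
    refine ENNReal.ofReal_le_ofReal ?_
    have h1 : ((1 : ℝ) + ‖z‖ ^ 2) ^ (-s / 2) ≤ 1 :=
      Real.rpow_le_one_of_one_le_of_nonpos (le_add_of_nonneg_right (by positivity))
        (by linarith)
    exact mul_le_of_le_one_left (Real.rpow_nonneg (norm_nonneg _) _) h1
  -- bound on U
  have hUb : ∫⁻ z in U, ENNReal.ofReal ((1 + ‖z‖ ^ 2) ^ (-s / 2) * ‖z - a‖ ^ (-t)) ≤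
      ENNReal.ofReal ((3 : ℝ) ^ t) * F0 := by
    have hpt : ∀ z ∈ U, (1 + ‖z‖ ^ 2) ^ (-s / 2) * ‖z - a‖ ^ (-t) ≤
        (3 : ℝ) ^ t * (1 + ‖z‖ ^ 2) ^ (-(s + t) / 2) := by
      intro z hz
      obtain ⟨h1, h2⟩ := hz
      have hx : (0 : ℝ) < 1 + ‖z‖ ^ 2 := by positivity
      have hs3 : √(1 + ‖z‖ ^ 2) ≤ 3 * ‖z - a‖ := by
        have h4 := sqrt_one_add_norm_sq_le z
        linarith
      have hbz : ‖z - a‖ ^ (-t) ≤ (3 : ℝ) ^ t * (1 + ‖z‖ ^ 2) ^ (-t / 2) := by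
        have h30 : (0 : ℝ) < √(1 + ‖z‖ ^ 2) / 3 := by
          have := Real.sqrt_pos.mpr hx
          positivity
        have hle : √(1 + ‖z‖ ^ 2) / 3 ≤ ‖z - a‖ := by linarith
        refine le_trans (Real.rpow_le_rpow_of_nonpos h30 hle (neg_nonpos.mpr ht))
          (le_of_eq ?_)
        rw [Real.div_rpow (Real.sqrt_nonneg _) (by norm_num : (0:ℝ) ≤ 3),
          Real.sqrt_eq_rpow, ← Real.rpow_mul hx.le, div_eq_mul_inv,
          Real.rpow_neg (by norm_num : (0:ℝ) ≤ 3), inv_inv, mul_comm]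
        congr 1
        ring
      calc (1 + ‖z‖ ^ 2) ^ (-s / 2) * ‖z - a‖ ^ (-t)
          ≤ (1 + ‖z‖ ^ 2) ^ (-s / 2) * ((3 : ℝ) ^ t * (1 + ‖z‖ ^ 2) ^ (-t / 2)) :=
            mul_le_mul_of_nonneg_left hbz (Real.rpow_nonneg hx.le _)
        _ = (3 : ℝ) ^ t * ((1 + ‖z‖ ^ 2) ^ (-s / 2) * (1 + ‖z‖ ^ 2) ^ (-t / 2)) := by ring
        _ = (3 : ℝ) ^ t * (1 + ‖z‖ ^ 2) ^ (-(s + t) / 2) := by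
            rw [← Real.rpow_add hx]
            congr 1
            ring
    calc ∫⁻ z in U, ENNReal.ofReal ((1 + ‖z‖ ^ 2) ^ (-s / 2) * ‖z - a‖ ^ (-t))
        ≤ ∫⁻ z in U, ENNReal.ofReal ((3 : ℝ) ^ t * (1 + ‖z‖ ^ 2) ^ (-(s + t) / 2)) :=
          setLIntegral_mono' hUm fun z hz => ENNReal.ofReal_le_ofReal (hpt z hz)
      _ ≤ ∫⁻ z : E, ENNReal.ofReal ((3 : ℝ) ^ t * (1 + ‖z‖ ^ 2) ^ (-(s + t) / 2)) := by
          rw [← setLIntegral_univ (μ := (volume : Measure (EuclideanSpace ℝ (Fin n))))]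
          exact lintegral_mono_set (subset_univ U)
      _ = ENNReal.ofReal ((3 : ℝ) ^ t) * F0 := by
          simp_rw [ENNReal.ofReal_mul (by positivity : (0:ℝ) ≤ (3:ℝ) ^ t)]
          rw [lintegral_const_mul' _ _ ENNReal.ofReal_ne_top, hF0]
  -- bound on V
  have hVb : ∫⁻ z in V, ENNReal.ofReal ((1 + ‖z‖ ^ 2) ^ (-s / 2) * ‖z - a‖ ^ (-t)) ≤
      ENNReal.ofReal ((2 : ℝ) ^ (-s)) * (K₂ * ENNReal.ofReal ((1 : ℝ) ^ ((n : ℝ) - (s + t)))) := by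
    have hpt : ∀ z ∈ V, (1 + ‖z‖ ^ 2) ^ (-s / 2) * ‖z - a‖ ^ (-t) ≤
        (2 : ℝ) ^ (-s) * ‖z - a‖ ^ (-(s + t)) := by
      intro z hz
      obtain ⟨h1, h2⟩ := hz
      have hx : (0 : ℝ) < 1 + ‖z‖ ^ 2 := by positivity
      have hb0 : (0 : ℝ) < ‖z - a‖ := lt_of_lt_of_le one_pos h1
      have hzn : 2 * ‖z - a‖ ≤ √(1 + ‖z‖ ^ 2) := by
        have h5 : ‖z‖ = √(‖z‖ ^ 2) := (Real.sqrt_sq (norm_nonneg z)).symm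
        have h6 : √(‖z‖ ^ 2) ≤ √(1 + ‖z‖ ^ 2) := Real.sqrt_le_sqrt (by linarith)
        linarith
      have hws : (1 + ‖z‖ ^ 2) ^ (-s / 2) ≤ (2 : ℝ) ^ (-s) * ‖z - a‖ ^ (-s) := by
        have e1 : (1 + ‖z‖ ^ 2) ^ (-s / 2) = (√(1 + ‖z‖ ^ 2)) ^ (-s) := by
          rw [Real.sqrt_eq_rpow, ← Real.rpow_mul hx.le]
          congr 1
          ring
        rw [e1, ← Real.mul_rpow (by norm_num : (0:ℝ) ≤ 2) (norm_nonneg _)]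
        exact Real.rpow_le_rpow_of_nonpos (by positivity) hzn (neg_nonpos.mpr hs.le)
      calc (1 + ‖z‖ ^ 2) ^ (-s / 2) * ‖z - a‖ ^ (-t)
          ≤ ((2 : ℝ) ^ (-s) * ‖z - a‖ ^ (-s)) * ‖z - a‖ ^ (-t) :=
            mul_le_mul_of_nonneg_right hws (Real.rpow_nonneg (norm_nonneg _) _)
        _ = (2 : ℝ) ^ (-s) * (‖z - a‖ ^ (-s) * ‖z - a‖ ^ (-t)) := by ring
        _ = (2 : ℝ) ^ (-s) * ‖z - a‖ ^ (-(s + t)) := by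
            rw [← Real.rpow_add hb0]
            congr 1
            ring
    calc ∫⁻ z in V, ENNReal.ofReal ((1 + ‖z‖ ^ 2) ^ (-s / 2) * ‖z - a‖ ^ (-t))
        ≤ ∫⁻ z in V, ENNReal.ofReal ((2 : ℝ) ^ (-s) * ‖z - a‖ ^ (-(s + t))) :=
          setLIntegral_mono' hVm fun z hz => ENNReal.ofReal_le_ofReal (hpt z hz)
      _ ≤ ∫⁻ z in {z : E | (1:ℝ) ≤ ‖z - a‖}, ENNReal.ofReal ((2 : ℝ) ^ (-s) * ‖z - a‖ ^ (-(s + t))) :=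
          lintegral_mono_set fun z hz => hz.1
      _ = ENNReal.ofReal ((2 : ℝ) ^ (-s)) *
          ∫⁻ z in {z : E | (1:ℝ) ≤ ‖z - a‖}, ENNReal.ofReal (‖z - a‖ ^ (-(s + t))) := by
          simp_rw [ENNReal.ofReal_mul (by positivity : (0:ℝ) ≤ (2:ℝ) ^ (-s))]
          exact lintegral_const_mul' _ _ ENNReal.ofReal_ne_top
      _ ≤ ENNReal.ofReal ((2 : ℝ) ^ (-s)) * (K₂ * ENNReal.ofReal ((1 : ℝ) ^ ((n : ℝ) - (s + t)))) := by
          gcongr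
          exact hout a 1 one_pos
  calc ∫⁻ z : E, ENNReal.ofReal ((1 + ‖z‖ ^ 2) ^ (-s / 2) * ‖z - a‖ ^ (-t))
      = ∫⁻ z in (univ : Set (EuclideanSpace ℝ (Fin n))),
          ENNReal.ofReal ((1 + ‖z‖ ^ 2) ^ (-s / 2) * ‖z - a‖ ^ (-t)) :=
        (setLIntegral_univ _).symm
    _ ≤ ∫⁻ z in P ∪ (U ∪ V), ENNReal.ofReal ((1 + ‖z‖ ^ 2) ^ (-s / 2) * ‖z - a‖ ^ (-t)) :=
        lintegral_mono_set hcover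
    _ ≤ (∫⁻ z in P, ENNReal.ofReal ((1 + ‖z‖ ^ 2) ^ (-s / 2) * ‖z - a‖ ^ (-t)))
        + ∫⁻ z in U ∪ V, ENNReal.ofReal ((1 + ‖z‖ ^ 2) ^ (-s / 2) * ‖z - a‖ ^ (-t)) :=
        lintegral_union_le _ _ _
    _ ≤ (∫⁻ z in P, ENNReal.ofReal ((1 + ‖z‖ ^ 2) ^ (-s / 2) * ‖z - a‖ ^ (-t)))
        + ((∫⁻ z in U, ENNReal.ofReal ((1 + ‖z‖ ^ 2) ^ (-s / 2) * ‖z - a‖ ^ (-t)))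
          + ∫⁻ z in V, ENNReal.ofReal ((1 + ‖z‖ ^ 2) ^ (-s / 2) * ‖z - a‖ ^ (-t))) := by
        gcongr
        exact lintegral_union_le _ _ _
    _ ≤ K₁ * ENNReal.ofReal ((1 : ℝ) ^ ((n : ℝ) - t)) + (ENNReal.ofReal ((3 : ℝ) ^ t) * F0 +
        ENNReal.ofReal ((2 : ℝ) ^ (-s)) * (K₂ * ENNReal.ofReal ((1 : ℝ) ^ ((n : ℝ) - (s + t))))) :=
        add_le_add hPb (add_le_add hUb hVb)

lemma aux_half {k l s θ : ℝ} (hk : 0 ≤ k) (hθ0 : 0 ≤ θ) (hθl : θ ≤ l)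
    {M : ℝ≥0∞}
    (hM : ∀ a : E, ∫⁻ z : E,
        ENNReal.ofReal ((1 + ‖z‖ ^ 2) ^ (-s / 2) * ‖z - a‖ ^ (-(k + l - θ))) ≤ M)
    (u₁ u₂ : E) (h12 : u₁ ≠ u₂) :
    ∫⁻ z in {z : E | ‖z - u₁‖ ≤ ‖z - u₂‖} \ {u₁},
      ENNReal.ofReal ((1 + ‖z‖ ^ 2) ^ (-s / 2) / (‖z - u₁‖ ^ k * ‖z - u₂‖ ^ l)) ≤
      ENNReal.ofReal ((‖u₁ - u₂‖ / 2) ^ (-θ)) * M := by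
  set d := ‖u₁ - u₂‖ with hd
  have hd0 : 0 < d := norm_pos_iff.mpr (sub_ne_zero_of_ne h12)
  have hmz : Measurable fun z : E => ‖z - u₁‖ :=
    ((continuous_id.sub continuous_const).norm).measurable
  have hmz2 : Measurable fun z : E => ‖z - u₂‖ :=
    ((continuous_id.sub continuous_const).norm).measurable
  have hSm : MeasurableSet ({z : E | ‖z - u₁‖ ≤ ‖z - u₂‖} \ {u₁}) :=
    (measurableSet_le hmz hmz2).diff (measurableSet_singleton _)
  have hpt : ∀ z ∈ {z : E | ‖z - u₁‖ ≤ ‖z - u₂‖} \ {u₁},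
      (1 + ‖z‖ ^ 2) ^ (-s / 2) / (‖z - u₁‖ ^ k * ‖z - u₂‖ ^ l) ≤
      (d / 2) ^ (-θ) * ((1 + ‖z‖ ^ 2) ^ (-s / 2) * ‖z - u₁‖ ^ (-(k + l - θ))) := by
    rintro z ⟨hz1, hz2⟩
    simp only [Set.mem_setOf_eq] at hz1
    have ha : (0 : ℝ) < ‖z - u₁‖ :=
      norm_pos_iff.mpr (sub_ne_zero_of_ne (by simpa using hz2))
    have hb : (0 : ℝ) < ‖z - u₂‖ := lt_of_lt_of_le ha hz1
    have hdb : d / 2 ≤ ‖z - u₂‖ := by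
      have htri := dist_triangle u₁ z u₂
      rw [dist_eq_norm, dist_eq_norm, dist_eq_norm] at htri
      have h7 : ‖u₁ - z‖ = ‖z - u₁‖ := norm_sub_rev _ _
      linarith
    have hw0 : (0 : ℝ) ≤ (1 + ‖z‖ ^ 2) ^ (-s / 2) := Real.rpow_nonneg (by positivity) _
    have e0 : (1 + ‖z‖ ^ 2) ^ (-s / 2) / (‖z - u₁‖ ^ k * ‖z - u₂‖ ^ l) =
        (1 + ‖z‖ ^ 2) ^ (-s / 2) * (‖z - u₁‖ ^ (-k) * ‖z - u₂‖ ^ (-l)) := by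
      rw [div_eq_mul_inv, mul_inv, Real.rpow_neg (norm_nonneg _),
        Real.rpow_neg (norm_nonneg _)]
    rw [e0]
    have e1 : ‖z - u₂‖ ^ (-l) = ‖z - u₂‖ ^ (-θ) * ‖z - u₂‖ ^ (-(l - θ)) := by
      rw [← Real.rpow_add hb]; congr 1; ring
    have h8 : ‖z - u₂‖ ^ (-θ) ≤ (d / 2) ^ (-θ) :=
      Real.rpow_le_rpow_of_nonpos (half_pos hd0) hdb (neg_nonpos.mpr hθ0)
    have h9 : ‖z - u₂‖ ^ (-(l - θ)) ≤ ‖z - u₁‖ ^ (-(l - θ)) :=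
      Real.rpow_le_rpow_of_nonpos ha hz1 (neg_nonpos.mpr (by linarith))
    have e2 : ‖z - u₁‖ ^ (-k) * ‖z - u₁‖ ^ (-(l - θ)) = ‖z - u₁‖ ^ (-(k + l - θ)) := by
      rw [← Real.rpow_add ha]; congr 1; ring
    calc (1 + ‖z‖ ^ 2) ^ (-s / 2) * (‖z - u₁‖ ^ (-k) * ‖z - u₂‖ ^ (-l))
        = (1 + ‖z‖ ^ 2) ^ (-s / 2) *
          (‖z - u₁‖ ^ (-k) * (‖z - u₂‖ ^ (-θ) * ‖z - u₂‖ ^ (-(l - θ)))) := by rw [e1]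
      _ ≤ (1 + ‖z‖ ^ 2) ^ (-s / 2) *
          (‖z - u₁‖ ^ (-k) * ((d / 2) ^ (-θ) * ‖z - u₁‖ ^ (-(l - θ)))) := by
          refine mul_le_mul_of_nonneg_left ?_ hw0
          refine mul_le_mul_of_nonneg_left ?_ (Real.rpow_nonneg (norm_nonneg _) _)
          exact mul_le_mul h8 h9 (Real.rpow_nonneg (norm_nonneg _) _)
            (Real.rpow_nonneg (by positivity) _)
      _ = (d / 2) ^ (-θ) * ((1 + ‖z‖ ^ 2) ^ (-s / 2) *
          (‖z - u₁‖ ^ (-k) * ‖z - u₁‖ ^ (-(l - θ)))) := by ring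
      _ = (d / 2) ^ (-θ) * ((1 + ‖z‖ ^ 2) ^ (-s / 2) * ‖z - u₁‖ ^ (-(k + l - θ))) := by
          rw [e2]
  calc ∫⁻ z in {z : E | ‖z - u₁‖ ≤ ‖z - u₂‖} \ {u₁},
        ENNReal.ofReal ((1 + ‖z‖ ^ 2) ^ (-s / 2) / (‖z - u₁‖ ^ k * ‖z - u₂‖ ^ l))
      ≤ ∫⁻ z in {z : E | ‖z - u₁‖ ≤ ‖z - u₂‖} \ {u₁},
        ENNReal.ofReal ((d / 2) ^ (-θ) *
          ((1 + ‖z‖ ^ 2) ^ (-s / 2) * ‖z - u₁‖ ^ (-(k + l - θ)))) :=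
        setLIntegral_mono' hSm fun z hz => ENNReal.ofReal_le_ofReal (hpt z hz)
    _ ≤ ∫⁻ z : E, ENNReal.ofReal ((d / 2) ^ (-θ) *
          ((1 + ‖z‖ ^ 2) ^ (-s / 2) * ‖z - u₁‖ ^ (-(k + l - θ)))) := by
        rw [← setLIntegral_univ (μ := (volume : Measure (EuclideanSpace ℝ (Fin n))))]
        exact lintegral_mono_set (subset_univ _)
    _ = ENNReal.ofReal ((d / 2) ^ (-θ)) *
        ∫⁻ z : E, ENNReal.ofReal ((1 + ‖z‖ ^ 2) ^ (-s / 2) * ‖z - u₁‖ ^ (-(k + l - θ))) := by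
        simp_rw [ENNReal.ofReal_mul (Real.rpow_nonneg (by positivity : (0:ℝ) ≤ d / 2) (-θ))]
        exact lintegral_const_mul' _ _ ENNReal.ofReal_ne_top
    _ ≤ ENNReal.ofReal ((d / 2) ^ (-θ)) * M := by
        gcongr
        exact hM u₁

lemma aux_piece_ball {k l s : ℝ} (hk : 0 ≤ k) (hl : 0 ≤ l) (hs : 0 ≤ s)
    {K : ℝ≥0∞}
    (hK : ∀ (a : E) (r : ℝ), 0 < r →
      ∫⁻ z in {z : E | ‖z - a‖ ≤ r}, ENNReal.ofReal (‖z - a‖ ^ (-k)) ≤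
        K * ENNReal.ofReal (r ^ ((n : ℝ) - k)))
    (u₁ u₂ : E) (h12 : u₁ ≠ u₂) :
    ∫⁻ z in {z : E | ‖z - u₁‖ ≤ ‖u₁ - u₂‖ / 2},
      ENNReal.ofReal ((1 + ‖z‖ ^ 2) ^ (-s / 2) / (‖z - u₁‖ ^ k * ‖z - u₂‖ ^ l)) ≤
      ENNReal.ofReal ((‖u₁ - u₂‖ / 2) ^ (-l)) *
        (K * ENNReal.ofReal ((‖u₁ - u₂‖ / 2) ^ ((n : ℝ) - k))) := by
  set d := ‖u₁ - u₂‖ with hd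
  have hd0 : 0 < d := norm_pos_iff.mpr (sub_ne_zero_of_ne h12)
  have hmz : Measurable fun z : E => ‖z - u₁‖ :=
    ((continuous_id.sub continuous_const).norm).measurable
  have hSm : MeasurableSet {z : E | ‖z - u₁‖ ≤ d / 2} :=
    measurableSet_le hmz measurable_const
  have hpt : ∀ z ∈ {z : E | ‖z - u₁‖ ≤ d / 2},
      (1 + ‖z‖ ^ 2) ^ (-s / 2) / (‖z - u₁‖ ^ k * ‖z - u₂‖ ^ l) ≤
      (d / 2) ^ (-l) * ‖z - u₁‖ ^ (-k) := by
    intro z hz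
    simp only [Set.mem_setOf_eq] at hz
    have hdb : d / 2 ≤ ‖z - u₂‖ := by
      have htri := dist_triangle u₁ z u₂
      rw [dist_eq_norm, dist_eq_norm, dist_eq_norm] at htri
      have h7 : ‖u₁ - z‖ = ‖z - u₁‖ := norm_sub_rev _ _
      linarith
    have hw1 : (1 + ‖z‖ ^ 2) ^ (-s / 2) ≤ 1 :=
      Real.rpow_le_one_of_one_le_of_nonpos (le_add_of_nonneg_right (by positivity))
        (by linarith)
    have e0 : (1 + ‖z‖ ^ 2) ^ (-s / 2) / (‖z - u₁‖ ^ k * ‖z - u₂‖ ^ l) =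
        (1 + ‖z‖ ^ 2) ^ (-s / 2) * (‖z - u₁‖ ^ (-k) * ‖z - u₂‖ ^ (-l)) := by
      rw [div_eq_mul_inv, mul_inv, Real.rpow_neg (norm_nonneg _),
        Real.rpow_neg (norm_nonneg _)]
    rw [e0]
    have h8 : ‖z - u₂‖ ^ (-l) ≤ (d / 2) ^ (-l) :=
      Real.rpow_le_rpow_of_nonpos (half_pos hd0) hdb (neg_nonpos.mpr hl)
    calc (1 + ‖z‖ ^ 2) ^ (-s / 2) * (‖z - u₁‖ ^ (-k) * ‖z - u₂‖ ^ (-l))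
        ≤ 1 * (‖z - u₁‖ ^ (-k) * (d / 2) ^ (-l)) := by
          refine mul_le_mul hw1 ?_ (by positivity) one_pos.le
          exact mul_le_mul_of_nonneg_left h8 (Real.rpow_nonneg (norm_nonneg _) _)
      _ = (d / 2) ^ (-l) * ‖z - u₁‖ ^ (-k) := by ring
  calc ∫⁻ z in {z : E | ‖z - u₁‖ ≤ d / 2},
        ENNReal.ofReal ((1 + ‖z‖ ^ 2) ^ (-s / 2) / (‖z - u₁‖ ^ k * ‖z - u₂‖ ^ l))
      ≤ ∫⁻ z in {z : E | ‖z - u₁‖ ≤ d / 2},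
        ENNReal.ofReal ((d / 2) ^ (-l) * ‖z - u₁‖ ^ (-k)) :=
        setLIntegral_mono' hSm fun z hz => ENNReal.ofReal_le_ofReal (hpt z hz)
    _ = ENNReal.ofReal ((d / 2) ^ (-l)) *
        ∫⁻ z in {z : E | ‖z - u₁‖ ≤ d / 2}, ENNReal.ofReal (‖z - u₁‖ ^ (-k)) := by
        simp_rw [ENNReal.ofReal_mul (Real.rpow_nonneg (by positivity : (0:ℝ) ≤ d / 2) (-l))]
        exact lintegral_const_mul' _ _ ENNReal.ofReal_ne_top
    _ ≤ ENNReal.ofReal ((d / 2) ^ (-l)) *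
        (K * ENNReal.ofReal ((d / 2) ^ ((n : ℝ) - k))) := by
        gcongr
        exact hK u₁ (d / 2) (half_pos hd0)

lemma aux_piece_out {k l s : ℝ} (hk : 0 ≤ k) (hl : 0 ≤ l) (hs : 0 ≤ s)
    {K : ℝ≥0∞}
    (hK : ∀ (a : E) (r : ℝ), 0 < r →
      ∫⁻ z in {z : E | r ≤ ‖z - a‖}, ENNReal.ofReal (‖z - a‖ ^ (-(k + l))) ≤
        K * ENNReal.ofReal (r ^ ((n : ℝ) - (k + l))))
    (u₁ u₂ : E) (h12 : u₁ ≠ u₂) :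
    ∫⁻ z in {z : E | ‖u₁ - u₂‖ / 2 ≤ ‖z - u₁‖ ∧ ‖u₁ - u₂‖ / 2 ≤ ‖z - u₂‖},
      ENNReal.ofReal ((1 + ‖z‖ ^ 2) ^ (-s / 2) / (‖z - u₁‖ ^ k * ‖z - u₂‖ ^ l)) ≤
      ENNReal.ofReal ((3 : ℝ) ^ l) *
        (K * ENNReal.ofReal ((‖u₁ - u₂‖ / 2) ^ ((n : ℝ) - (k + l)))) := by
  set d := ‖u₁ - u₂‖ with hd
  have hd0 : 0 < d := norm_pos_iff.mpr (sub_ne_zero_of_ne h12)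
  have hmz : Measurable fun z : E => ‖z - u₁‖ :=
    ((continuous_id.sub continuous_const).norm).measurable
  have hmz2 : Measurable fun z : E => ‖z - u₂‖ :=
    ((continuous_id.sub continuous_const).norm).measurable
  have hSm : MeasurableSet {z : E | d / 2 ≤ ‖z - u₁‖ ∧ d / 2 ≤ ‖z - u₂‖} :=
    (measurableSet_le measurable_const hmz).inter (measurableSet_le measurable_const hmz2)
  have hpt : ∀ z ∈ {z : E | d / 2 ≤ ‖z - u₁‖ ∧ d / 2 ≤ ‖z - u₂‖},
      (1 + ‖z‖ ^ 2) ^ (-s / 2) / (‖z - u₁‖ ^ k * ‖z - u₂‖ ^ l) ≤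
      (3 : ℝ) ^ l * ‖z - u₁‖ ^ (-(k + l)) := by
    rintro z ⟨hz1, hz2⟩
    have ha : (0 : ℝ) < ‖z - u₁‖ := lt_of_lt_of_le (half_pos hd0) hz1
    have hb : (0 : ℝ) < ‖z - u₂‖ := lt_of_lt_of_le (half_pos hd0) hz2
    have hab : ‖z - u₁‖ / 3 ≤ ‖z - u₂‖ := by
      have htri := dist_triangle z u₂ u₁
      rw [dist_eq_norm, dist_eq_norm, dist_eq_norm] at htri
      have h7 : ‖u₂ - u₁‖ = d := norm_sub_rev _ _
      linarith
    have hw1 : (1 + ‖z‖ ^ 2) ^ (-s / 2) ≤ 1 :=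
      Real.rpow_le_one_of_one_le_of_nonpos (le_add_of_nonneg_right (by positivity))
        (by linarith)
    have e0 : (1 + ‖z‖ ^ 2) ^ (-s / 2) / (‖z - u₁‖ ^ k * ‖z - u₂‖ ^ l) =
        (1 + ‖z‖ ^ 2) ^ (-s / 2) * (‖z - u₁‖ ^ (-k) * ‖z - u₂‖ ^ (-l)) := by
      rw [div_eq_mul_inv, mul_inv, Real.rpow_neg (norm_nonneg _),
        Real.rpow_neg (norm_nonneg _)]
    rw [e0]
    have h8 : ‖z - u₂‖ ^ (-l) ≤ (3 : ℝ) ^ l * ‖z - u₁‖ ^ (-l) := by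
      have h30 : (0 : ℝ) < ‖z - u₁‖ / 3 := by positivity
      refine le_trans (Real.rpow_le_rpow_of_nonpos h30 hab (neg_nonpos.mpr hl))
        (le_of_eq ?_)
      rw [Real.div_rpow (norm_nonneg _) (by norm_num : (0:ℝ) ≤ 3), div_eq_mul_inv,
        Real.rpow_neg (by norm_num : (0:ℝ) ≤ 3), inv_inv, mul_comm]
    calc (1 + ‖z‖ ^ 2) ^ (-s / 2) * (‖z - u₁‖ ^ (-k) * ‖z - u₂‖ ^ (-l))
        ≤ 1 * (‖z - u₁‖ ^ (-k) * ((3 : ℝ) ^ l * ‖z - u₁‖ ^ (-l))) := by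
          refine mul_le_mul hw1 ?_ (by positivity) one_pos.le
          exact mul_le_mul_of_nonneg_left h8 (Real.rpow_nonneg (norm_nonneg _) _)
      _ = (3 : ℝ) ^ l * (‖z - u₁‖ ^ (-k) * ‖z - u₁‖ ^ (-l)) := by ring
      _ = (3 : ℝ) ^ l * ‖z - u₁‖ ^ (-(k + l)) := by
          rw [← Real.rpow_add ha]; congr 1; ring
  calc ∫⁻ z in {z : E | d / 2 ≤ ‖z - u₁‖ ∧ d / 2 ≤ ‖z - u₂‖},
        ENNReal.ofReal ((1 + ‖z‖ ^ 2) ^ (-s / 2) / (‖z - u₁‖ ^ k * ‖z - u₂‖ ^ l))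
      ≤ ∫⁻ z in {z : E | d / 2 ≤ ‖z - u₁‖ ∧ d / 2 ≤ ‖z - u₂‖},
        ENNReal.ofReal ((3 : ℝ) ^ l * ‖z - u₁‖ ^ (-(k + l))) :=
        setLIntegral_mono' hSm fun z hz => ENNReal.ofReal_le_ofReal (hpt z hz)
    _ ≤ ∫⁻ z in {z : E | d / 2 ≤ ‖z - u₁‖},
        ENNReal.ofReal ((3 : ℝ) ^ l * ‖z - u₁‖ ^ (-(k + l))) :=
        lintegral_mono_set fun z hz => hz.1
    _ = ENNReal.ofReal ((3 : ℝ) ^ l) *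
        ∫⁻ z in {z : E | d / 2 ≤ ‖z - u₁‖}, ENNReal.ofReal (‖z - u₁‖ ^ (-(k + l))) := by
        simp_rw [ENNReal.ofReal_mul (by positivity : (0:ℝ) ≤ (3:ℝ) ^ l)]
        exact lintegral_const_mul' _ _ ENNReal.ofReal_ne_top
    _ ≤ ENNReal.ofReal ((3 : ℝ) ^ l) *
        (K * ENNReal.ofReal ((d / 2) ^ ((n : ℝ) - (k + l)))) := by
        gcongr
        exact hK u₁ (d / 2) (half_pos hd0)

lemma aux_main2 (hn : 0 < n) {k l s : ℝ} (hk : 0 ≤ k) (hl : 0 ≤ l)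
    (θ : ℝ) (M : ℝ≥0∞) (hθ0 : 0 ≤ θ) (hθl : θ ≤ l) (hθk : θ ≤ k)
    (hM : ∀ a : E, ∫⁻ z : E,
        ENNReal.ofReal ((1 + ‖z‖ ^ 2) ^ (-s / 2) * ‖z - a‖ ^ (-(k + l - θ))) ≤ M)
    (u₁ u₂ : E) (h12 : u₁ ≠ u₂) :
    ∫⁻ z : E, ENNReal.ofReal ((1 + ‖z‖ ^ 2) ^ (-s / 2) / (‖z - u₁‖ ^ k * ‖z - u₂‖ ^ l)) ≤
      ENNReal.ofReal ((‖u₁ - u₂‖ / 2) ^ (-θ)) * (M + M) := by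
  haveI : Nonempty (Fin n) := ⟨⟨0, hn⟩⟩
  haveI : Nontrivial (EuclideanSpace ℝ (Fin n)) := inferInstance
  set A₁ : Set (EuclideanSpace ℝ (Fin n)) := {z : E | ‖z - u₁‖ ≤ ‖z - u₂‖} \ {u₁} with hA₁
  set A₂ : Set (EuclideanSpace ℝ (Fin n)) := {z : E | ‖z - u₂‖ ≤ ‖z - u₁‖} \ {u₂} with hA₂
  have hcover : (univ : Set (EuclideanSpace ℝ (Fin n))) ⊆ A₁ ∪ (A₂ ∪ ({u₁} ∪ {u₂})) := by
    intro z _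
    rcases le_total (‖z - u₁‖) (‖z - u₂‖) with h | h
    · rcases eq_or_ne z u₁ with h' | h'
      · exact Or.inr (Or.inr (Or.inl h'))
      · exact Or.inl ⟨h, h'⟩
    · rcases eq_or_ne z u₂ with h' | h'
      · exact Or.inr (Or.inr (Or.inr h'))
      · exact Or.inr (Or.inl ⟨h, h'⟩)
  have hM' : ∀ a : E, ∫⁻ z : E,
      ENNReal.ofReal ((1 + ‖z‖ ^ 2) ^ (-s / 2) * ‖z - a‖ ^ (-(l + k - θ))) ≤ M := by
    intro a
    rw [show l + k - θ = k + l - θ from by ring]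
    exact hM a
  have half1 := aux_half hk hθ0 hθl hM u₁ u₂ h12
  have half2 := aux_half hl hθ0 hθk hM' u₂ u₁ h12.symm
  rw [norm_sub_rev u₂ u₁] at half2
  have half2' : ∫⁻ z in A₂,
      ENNReal.ofReal ((1 + ‖z‖ ^ 2) ^ (-s / 2) / (‖z - u₁‖ ^ k * ‖z - u₂‖ ^ l)) ≤
      ENNReal.ofReal ((‖u₁ - u₂‖ / 2) ^ (-θ)) * M := by
    refine le_trans (le_of_eq (lintegral_congr fun z => ?_)) half2
    rw [mul_comm (‖z - u₁‖ ^ k) (‖z - u₂‖ ^ l)]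
  calc ∫⁻ z : E, ENNReal.ofReal ((1 + ‖z‖ ^ 2) ^ (-s / 2) / (‖z - u₁‖ ^ k * ‖z - u₂‖ ^ l))
      = ∫⁻ z in (univ : Set (EuclideanSpace ℝ (Fin n))),
          ENNReal.ofReal ((1 + ‖z‖ ^ 2) ^ (-s / 2) / (‖z - u₁‖ ^ k * ‖z - u₂‖ ^ l)) :=
        (setLIntegral_univ _).symm
    _ ≤ ∫⁻ z in A₁ ∪ (A₂ ∪ ({u₁} ∪ {u₂})),
          ENNReal.ofReal ((1 + ‖z‖ ^ 2) ^ (-s / 2) / (‖z - u₁‖ ^ k * ‖z - u₂‖ ^ l)) :=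
        lintegral_mono_set hcover
    _ ≤ (∫⁻ z in A₁, ENNReal.ofReal ((1 + ‖z‖ ^ 2) ^ (-s / 2) / (‖z - u₁‖ ^ k * ‖z - u₂‖ ^ l)))
        + ∫⁻ z in A₂ ∪ ({u₁} ∪ {u₂}),
          ENNReal.ofReal ((1 + ‖z‖ ^ 2) ^ (-s / 2) / (‖z - u₁‖ ^ k * ‖z - u₂‖ ^ l)) :=
        lintegral_union_le _ _ _
    _ ≤ (∫⁻ z in A₁, ENNReal.ofReal ((1 + ‖z‖ ^ 2) ^ (-s / 2) / (‖z - u₁‖ ^ k * ‖z - u₂‖ ^ l)))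
        + ((∫⁻ z in A₂, ENNReal.ofReal ((1 + ‖z‖ ^ 2) ^ (-s / 2) / (‖z - u₁‖ ^ k * ‖z - u₂‖ ^ l)))
          + ∫⁻ z in ({u₁} ∪ {u₂} : Set (EuclideanSpace ℝ (Fin n))),
              ENNReal.ofReal ((1 + ‖z‖ ^ 2) ^ (-s / 2) / (‖z - u₁‖ ^ k * ‖z - u₂‖ ^ l))) := by
        gcongr
        exact lintegral_union_le _ _ _
    _ ≤ ENNReal.ofReal ((‖u₁ - u₂‖ / 2) ^ (-θ)) * M +
        (ENNReal.ofReal ((‖u₁ - u₂‖ / 2) ^ (-θ)) * M + 0) := by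
        refine add_le_add half1 (add_le_add half2' (le_of_eq ?_))
        refine setLIntegral_measure_zero _ _ ?_
        refine measure_union_null (measure_singleton _) (measure_singleton _)
    _ = ENNReal.ofReal ((‖u₁ - u₂‖ / 2) ^ (-θ)) * (M + M) := by ring


open MeasureTheory Real

/-- For `0 ≤ k, ℓ < n`, `β > 0` with `k + ℓ + β ≥ n` and `k + ℓ ≠ n`:
`∫_{ℝⁿ} ⟨z⟩^{−β−ε} |z−u₁|^{−k} |z−u₂|^{−ℓ} dz ≲ |u₁−u₂|^{−max(0,k+ℓ−n)}` if `|u₁−u₂| ≤ 1`,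
and `≲ |u₁−u₂|^{−min(k,ℓ,k+ℓ+β−n)}` if `|u₁−u₂| > 1`, uniformly in `u₁, u₂`. -/
theorem stmt_6 (n : ℕ) (hn : 0 < n) (k l β ε : ℝ) (hk : 0 ≤ k) (hkn : k < n)
    (hl : 0 ≤ l) (hln : l < n) (hβ : 0 < β) (hε : 0 < ε)
    (hklβ : (n : ℝ) ≤ k + l + β) (hkl : k + l ≠ (n : ℝ)) :
    ∃ C : ℝ, ∀ u₁ u₂ : EuclideanSpace ℝ (Fin n), u₁ ≠ u₂ →
      ((‖u₁ - u₂‖ ≤ 1 →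
        (∫ z : EuclideanSpace ℝ (Fin n),
            (1 + ‖z‖ ^ 2) ^ (-(β + ε) / 2) / (‖z - u₁‖ ^ k * ‖z - u₂‖ ^ l))
          ≤ C * ‖u₁ - u₂‖ ^ (-(max 0 (k + l - n)))) ∧
      (1 < ‖u₁ - u₂‖ →
        (∫ z : EuclideanSpace ℝ (Fin n),
            (1 + ‖z‖ ^ 2) ^ (-(β + ε) / 2) / (‖z - u₁‖ ^ k * ‖z - u₂‖ ^ l))
          ≤ C * ‖u₁ - u₂‖ ^ (-(min k (min l (k + l + β - n)))))) := by
  haveI : Nonempty (Fin n) := ⟨⟨0, hn⟩⟩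
  haveI : Nontrivial (EuclideanSpace ℝ (Fin n)) := inferInstance
  set s : ℝ := β + ε with hsdef
  have hs0 : 0 < s := add_pos hβ hε
  set μe : ℝ := min k (min l (k + l + β - (n : ℝ))) with hμdef
  have hμ0 : 0 ≤ μe := le_min hk (le_min hl (by linarith))
  have hμk : μe ≤ k := min_le_left _ _
  have hμl : μe ≤ l := le_trans (min_le_right _ _) (min_le_left _ _)
  have hμβ : μe ≤ k + l + β - n := le_trans (min_le_right _ _) (min_le_right _ _)
  have hμgt : k + l - n < μe := lt_min (by linarith) (lt_min (by linarith) (by linarith))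
  obtain ⟨M₁, hM₁top, hM₁⟩ := aux_M (n := n) (s := s) (t := k + l - μe) hn hs0
    (by linarith) (by linarith) (by simp only [hsdef]; linarith)
  set KL : ℝ≥0∞ := ENNReal.ofReal ((2 : ℝ) ^ μe) * (M₁ + M₁) with hKL
  have hKLtop : KL ≠ ∞ :=
    ENNReal.mul_ne_top ENNReal.ofReal_ne_top (ENNReal.add_ne_top.mpr ⟨hM₁top, hM₁top⟩)
  have hhalfpow : ∀ (u₁ u₂ : EuclideanSpace ℝ (Fin n)) (x : ℝ), u₁ ≠ u₂ →
      (‖u₁ - u₂‖ / 2) ^ (-x) = (2 : ℝ) ^ x * ‖u₁ - u₂‖ ^ (-x) := by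
    intro u₁ u₂ x h12
    rw [Real.div_rpow (norm_nonneg _) (by norm_num : (0:ℝ) ≤ 2),
      Real.rpow_neg (by norm_num : (0:ℝ) ≤ 2), div_eq_mul_inv, inv_inv, mul_comm]
  have hlarge : ∀ u₁ u₂ : EuclideanSpace ℝ (Fin n), u₁ ≠ u₂ →
      ∫⁻ z : EuclideanSpace ℝ (Fin n), ENNReal.ofReal ((1 + ‖z‖ ^ 2) ^ (-s / 2) / (‖z - u₁‖ ^ k * ‖z - u₂‖ ^ l)) ≤
        KL * ENNReal.ofReal (‖u₁ - u₂‖ ^ (-μe)) := by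
    intro u₁ u₂ h12
    refine le_trans (aux_main2 hn hk hl μe M₁ hμ0 hμl hμk hM₁ u₁ u₂ h12) ?_
    rw [hhalfpow u₁ u₂ μe h12, ENNReal.ofReal_mul (by positivity : (0:ℝ) ≤ (2:ℝ) ^ μe), hKL]
    exact le_of_eq (by ring)
  have hmeas : ∀ u₁ u₂ : EuclideanSpace ℝ (Fin n), AEStronglyMeasurable
      (fun z : EuclideanSpace ℝ (Fin n) => (1 + ‖z‖ ^ 2) ^ (-s / 2) / (‖z - u₁‖ ^ k * ‖z - u₂‖ ^ l)) volume := by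
    intro u₁ u₂
    refine Measurable.aestronglyMeasurable (Measurable.div ?_ (Measurable.mul ?_ ?_))
    · exact ((continuous_const.add (continuous_norm.pow 2)).rpow_const
        (fun z => Or.inl (add_pos_of_pos_of_nonneg one_pos (sq_nonneg _)).ne')).measurable
    · exact ((continuous_id.sub continuous_const).norm.rpow_const
        (fun z => Or.inr hk)).measurable
    · exact ((continuous_id.sub continuous_const).norm.rpow_const
        (fun z => Or.inr hl)).measurable
  have hconv : ∀ u₁ u₂ : EuclideanSpace ℝ (Fin n),
      (∫ z : EuclideanSpace ℝ (Fin n), (1 + ‖z‖ ^ 2) ^ (-s / 2) / (‖z - u₁‖ ^ k * ‖z - u₂‖ ^ l)) =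
      (∫⁻ z : EuclideanSpace ℝ (Fin n), ENNReal.ofReal
        ((1 + ‖z‖ ^ 2) ^ (-s / 2) / (‖z - u₁‖ ^ k * ‖z - u₂‖ ^ l))).toReal := by
    intro u₁ u₂
    exact integral_eq_lintegral_of_nonneg_ae
      (Filter.Eventually.of_forall fun z => by positivity) (hmeas u₁ u₂)
  have hlargeR : ∀ (X : ℝ) (u₁ u₂ : EuclideanSpace ℝ (Fin n)), u₁ ≠ u₂ →
      (∫ z : EuclideanSpace ℝ (Fin n), (1 + ‖z‖ ^ 2) ^ (-s / 2) / (‖z - u₁‖ ^ k * ‖z - u₂‖ ^ l)) ≤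
        max X KL.toReal * ‖u₁ - u₂‖ ^ (-μe) := by
    intro X u₁ u₂ h12
    rw [hconv u₁ u₂]
    calc (∫⁻ z : EuclideanSpace ℝ (Fin n), ENNReal.ofReal
          ((1 + ‖z‖ ^ 2) ^ (-s / 2) / (‖z - u₁‖ ^ k * ‖z - u₂‖ ^ l))).toReal
        ≤ (KL * ENNReal.ofReal (‖u₁ - u₂‖ ^ (-μe))).toReal :=
          ENNReal.toReal_mono (ENNReal.mul_ne_top hKLtop ENNReal.ofReal_ne_top)
            (hlarge u₁ u₂ h12)
      _ = KL.toReal * ‖u₁ - u₂‖ ^ (-μe) := by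
          rw [ENNReal.toReal_mul, ENNReal.toReal_ofReal (Real.rpow_nonneg (norm_nonneg _) _)]
      _ ≤ max X KL.toReal * ‖u₁ - u₂‖ ^ (-μe) :=
          mul_le_mul_of_nonneg_right (le_max_right _ _) (Real.rpow_nonneg (norm_nonneg _) _)
  rcases lt_or_gt_of_ne hkl with hlt | hgt
  · -- case k + l < n
    obtain ⟨M₀, hM₀top, hM₀⟩ := aux_M (n := n) (s := s) (t := k + l - 0) hn hs0
      (by linarith) (by linarith) (by simp only [hsdef]; linarith)
    refine ⟨max (M₀ + M₀).toReal KL.toReal, ?_⟩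
    intro u₁ u₂ h12
    constructor
    · intro _
      have hb := aux_main2 hn hk hl 0 M₀ le_rfl hl hk hM₀ u₁ u₂ h12
      rw [neg_zero, Real.rpow_zero, ENNReal.ofReal_one, one_mul] at hb
      have hmax : max 0 (k + l - (n : ℝ)) = 0 := max_eq_left (by linarith)
      rw [hconv u₁ u₂, hmax, neg_zero, Real.rpow_zero, mul_one]
      calc (∫⁻ z : EuclideanSpace ℝ (Fin n), ENNReal.ofReal
            ((1 + ‖z‖ ^ 2) ^ (-s / 2) / (‖z - u₁‖ ^ k * ‖z - u₂‖ ^ l))).toReal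
          ≤ (M₀ + M₀).toReal :=
            ENNReal.toReal_mono (ENNReal.add_ne_top.mpr ⟨hM₀top, hM₀top⟩) hb
        _ ≤ max (M₀ + M₀).toReal KL.toReal := le_max_left _ _
    · intro _
      exact hlargeR (M₀ + M₀).toReal u₁ u₂ h12
  · -- case n < k + l
    obtain ⟨Kk, hKktop, hKk⟩ := aux_ball hn hk hkn
    obtain ⟨Kl, hKltop, hKl⟩ := aux_ball hn hl hln
    obtain ⟨Ko, hKotop, hKo⟩ := aux_out hn (show (n : ℝ) < k + l from hgt)
    set KS : ℝ≥0∞ := (Kk + (Kl + ENNReal.ofReal ((3 : ℝ) ^ l) * Ko)) *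
      ENNReal.ofReal ((2 : ℝ) ^ (k + l - (n : ℝ))) with hKS
    have hKStop : KS ≠ ∞ := by
      refine ENNReal.mul_ne_top (ENNReal.add_ne_top.mpr ⟨hKktop, ENNReal.add_ne_top.mpr
        ⟨hKltop, ENNReal.mul_ne_top ENNReal.ofReal_ne_top hKotop⟩⟩) ENNReal.ofReal_ne_top
    have hsmall : ∀ u₁ u₂ : EuclideanSpace ℝ (Fin n), u₁ ≠ u₂ →
        ∫⁻ z : EuclideanSpace ℝ (Fin n), ENNReal.ofReal ((1 + ‖z‖ ^ 2) ^ (-s / 2) / (‖z - u₁‖ ^ k * ‖z - u₂‖ ^ l)) ≤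
          KS * ENNReal.ofReal (‖u₁ - u₂‖ ^ (-(k + l - (n : ℝ)))) := by
      intro u₁ u₂ h12
      have hd0 : 0 < ‖u₁ - u₂‖ := norm_pos_iff.mpr (sub_ne_zero_of_ne h12)
      have hdh : (0 : ℝ) < ‖u₁ - u₂‖ / 2 := half_pos hd0
      set S₁ : Set (EuclideanSpace ℝ (Fin n)) := {z : EuclideanSpace ℝ (Fin n) | ‖z - u₁‖ ≤ ‖u₁ - u₂‖ / 2} with hS₁
      set S₂ : Set (EuclideanSpace ℝ (Fin n)) := {z : EuclideanSpace ℝ (Fin n) | ‖z - u₂‖ ≤ ‖u₁ - u₂‖ / 2} with hS₂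
      set R : Set (EuclideanSpace ℝ (Fin n)) :=
        {z : EuclideanSpace ℝ (Fin n) | ‖u₁ - u₂‖ / 2 ≤ ‖z - u₁‖ ∧ ‖u₁ - u₂‖ / 2 ≤ ‖z - u₂‖} with hR
      have hcover : (univ : Set (EuclideanSpace ℝ (Fin n))) ⊆ S₁ ∪ (S₂ ∪ R) := by
        intro z _
        rcases le_or_gt (‖z - u₁‖) (‖u₁ - u₂‖ / 2) with h | h
        · exact Or.inl h
        · rcases le_or_gt (‖z - u₂‖) (‖u₁ - u₂‖ / 2) with h' | h'
          · exact Or.inr (Or.inl h')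
          · exact Or.inr (Or.inr ⟨h.le, h'.le⟩)
      have piece1 := aux_piece_ball (s := s) hk hl hs0.le hKk u₁ u₂ h12
      have piece2 := aux_piece_ball (s := s) hl hk hs0.le hKl u₂ u₁ h12.symm
      rw [norm_sub_rev u₂ u₁] at piece2
      have piece2' : ∫⁻ z in S₂,
          ENNReal.ofReal ((1 + ‖z‖ ^ 2) ^ (-s / 2) / (‖z - u₁‖ ^ k * ‖z - u₂‖ ^ l)) ≤
          ENNReal.ofReal ((‖u₁ - u₂‖ / 2) ^ (-k)) *
            (Kl * ENNReal.ofReal ((‖u₁ - u₂‖ / 2) ^ ((n : ℝ) - l))) := by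
        refine le_trans (le_of_eq (lintegral_congr fun z => ?_)) piece2
        rw [mul_comm (‖z - u₁‖ ^ k) (‖z - u₂‖ ^ l)]
      have piece3 := aux_piece_out (s := s) hk hl hs0.le hKo u₁ u₂ h12
      have comb : ∀ (K : ℝ≥0∞) (x y : ℝ),
          ENNReal.ofReal ((‖u₁ - u₂‖ / 2) ^ x) *
            (K * ENNReal.ofReal ((‖u₁ - u₂‖ / 2) ^ y)) =
          K * ENNReal.ofReal ((‖u₁ - u₂‖ / 2) ^ (x + y)) := by
        intro K x y
        rw [Real.rpow_add hdh, ENNReal.ofReal_mul (Real.rpow_nonneg hdh.le _)]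
        ring
      calc ∫⁻ z : EuclideanSpace ℝ (Fin n), ENNReal.ofReal ((1 + ‖z‖ ^ 2) ^ (-s / 2) / (‖z - u₁‖ ^ k * ‖z - u₂‖ ^ l))
          = ∫⁻ z in (univ : Set (EuclideanSpace ℝ (Fin n))),
              ENNReal.ofReal ((1 + ‖z‖ ^ 2) ^ (-s / 2) / (‖z - u₁‖ ^ k * ‖z - u₂‖ ^ l)) :=
            (setLIntegral_univ _).symm
        _ ≤ ∫⁻ z in S₁ ∪ (S₂ ∪ R),
              ENNReal.ofReal ((1 + ‖z‖ ^ 2) ^ (-s / 2) / (‖z - u₁‖ ^ k * ‖z - u₂‖ ^ l)) :=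
            lintegral_mono_set hcover
        _ ≤ (∫⁻ z in S₁,
              ENNReal.ofReal ((1 + ‖z‖ ^ 2) ^ (-s / 2) / (‖z - u₁‖ ^ k * ‖z - u₂‖ ^ l)))
            + ∫⁻ z in S₂ ∪ R,
              ENNReal.ofReal ((1 + ‖z‖ ^ 2) ^ (-s / 2) / (‖z - u₁‖ ^ k * ‖z - u₂‖ ^ l)) :=
            lintegral_union_le _ _ _
        _ ≤ (∫⁻ z in S₁,
              ENNReal.ofReal ((1 + ‖z‖ ^ 2) ^ (-s / 2) / (‖z - u₁‖ ^ k * ‖z - u₂‖ ^ l)))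
            + ((∫⁻ z in S₂,
              ENNReal.ofReal ((1 + ‖z‖ ^ 2) ^ (-s / 2) / (‖z - u₁‖ ^ k * ‖z - u₂‖ ^ l)))
              + ∫⁻ z in R,
              ENNReal.ofReal ((1 + ‖z‖ ^ 2) ^ (-s / 2) / (‖z - u₁‖ ^ k * ‖z - u₂‖ ^ l))) := by
            gcongr
            exact lintegral_union_le _ _ _
        _ ≤ Kk * ENNReal.ofReal ((‖u₁ - u₂‖ / 2) ^ ((-l) + ((n : ℝ) - k)))
            + (Kl * ENNReal.ofReal ((‖u₁ - u₂‖ / 2) ^ ((-k) + ((n : ℝ) - l)))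
              + ENNReal.ofReal ((3 : ℝ) ^ l) *
                (Ko * ENNReal.ofReal ((‖u₁ - u₂‖ / 2) ^ ((n : ℝ) - (k + l))))) := by
            refine add_le_add (le_trans piece1 (le_of_eq (comb _ _ _)))
              (add_le_add (le_trans piece2' (le_of_eq (comb _ _ _))) piece3)
        _ = (Kk + (Kl + ENNReal.ofReal ((3 : ℝ) ^ l) * Ko)) *
              ENNReal.ofReal ((‖u₁ - u₂‖ / 2) ^ ((n : ℝ) - (k + l))) := by
            rw [show (-l) + ((n : ℝ) - k) = (n : ℝ) - (k + l) from by ring,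
              show (-k) + ((n : ℝ) - l) = (n : ℝ) - (k + l) from by ring]
            ring
        _ ≤ KS * ENNReal.ofReal (‖u₁ - u₂‖ ^ (-(k + l - (n : ℝ)))) := by
            rw [show (n : ℝ) - (k + l) = -(k + l - (n : ℝ)) from by ring,
              hhalfpow u₁ u₂ (k + l - (n : ℝ)) h12,
              ENNReal.ofReal_mul (by positivity : (0:ℝ) ≤ (2:ℝ) ^ (k + l - (n:ℝ))), hKS]
            exact le_of_eq (by ring)
    refine ⟨max KS.toReal KL.toReal, ?_⟩
    intro u₁ u₂ h12
    constructor
    · intro _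
      have hmax : max 0 (k + l - (n : ℝ)) = k + l - (n : ℝ) := max_eq_right (by linarith)
      rw [hconv u₁ u₂, hmax]
      calc (∫⁻ z : EuclideanSpace ℝ (Fin n), ENNReal.ofReal
            ((1 + ‖z‖ ^ 2) ^ (-s / 2) / (‖z - u₁‖ ^ k * ‖z - u₂‖ ^ l))).toReal
          ≤ (KS * ENNReal.ofReal (‖u₁ - u₂‖ ^ (-(k + l - (n : ℝ))))).toReal :=
            ENNReal.toReal_mono (ENNReal.mul_ne_top hKStop ENNReal.ofReal_ne_top)
              (hsmall u₁ u₂ h12)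
        _ = KS.toReal * ‖u₁ - u₂‖ ^ (-(k + l - (n : ℝ))) := by
            rw [ENNReal.toReal_mul, ENNReal.toReal_ofReal (Real.rpow_nonneg (norm_nonneg _) _)]
        _ ≤ max KS.toReal KL.toReal * ‖u₁ - u₂‖ ^ (-(k + l - (n : ℝ))) :=
            mul_le_mul_of_nonneg_right (le_max_left _ _) (Real.rpow_nonneg (norm_nonneg _) _)
    · intro _
      exact hlargeR KS.toReal u₁ u₂ h12
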